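/- Let ϱ₁,…,ϱₙ > 0, ϑ > 0, m₁,…,mₙ > 0, and set p_k = ϑ ϱ_k / m_k, π_m = ∑ₖ p_k, Y_k = ϱ_k / ϱ with ϱ = ∑ₖ ϱ_k. Let F_k ∈ ℝ³ satisfy ∑ₖ F_k = 0 and F_k = −(C₀/π_m)(∇p_k − Y_k ∇π_m) for given vectors ∇p_k (so that ∇π_m = ∑ₗ ∇p_l), with C₀ > 0. Then −∑_{k=1}^n (F_k / m_k) · ∇log p_k = ∑_{k=1}^n π_m |F_k|² / (C₀ ϑ ϱ_k) ≥ 0, where ∇log p_k := ∇p_k / p_k. -/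

import Mathlib

open BigOperators

theorem entropy_production_diffusion_nonneg (n : ℕ) (hn : 1 ≤ n)
    (m ϱk : Fin n → ℝ) (ϑ C₀ : ℝ)
    (hϱk : ∀ k, 0 < ϱk k) (hϑ : 0 < ϑ) (hm : ∀ k, 0 < m k) (hC₀ : 0 < C₀)
    (p : Fin n → ℝ) (hp : ∀ k, p k = ϑ * ϱk k / m k)
    (πm : ℝ) (hπ : πm = ∑ k, p k)
    (ϱ : ℝ) (hϱ : ϱ = ∑ k, ϱk k)
    (Y : Fin n → ℝ) (hY : ∀ k, Y k = ϱk k / ϱ)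
    (gp : Fin n → EuclideanSpace ℝ (Fin 3))
    (gπ : EuclideanSpace ℝ (Fin 3)) (hgπ : gπ = ∑ l, gp l)
    (F : Fin n → EuclideanSpace ℝ (Fin 3))
    (hFsum : ∑ k, F k = 0)
    (hF : ∀ k, F k = (-(C₀ / πm)) • (gp k - Y k • gπ)) :
    (-∑ k, (inner ℝ ((1 / m k) • F k) ((1 / p k) • gp k) : ℝ))
      = ∑ k, πm * ‖F k‖ ^ 2 / (C₀ * ϑ * ϱk k)
    ∧ 0 ≤ ∑ k, πm * ‖F k‖ ^ 2 / (C₀ * ϑ * ϱk k) := by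
  have hne : Nonempty (Fin n) := ⟨⟨0, hn⟩⟩
  have hπm : 0 < πm := by
    rw [hπ]
    apply Finset.sum_pos
    · intro k _
      rw [hp k]
      have := hϱk k; have := hm k
      positivity
    · exact Finset.univ_nonempty
  have hϱ0 : 0 < ϱ := by
    rw [hϱ]
    exact Finset.sum_pos (fun k _ => hϱk k) Finset.univ_nonempty
  have hgp : ∀ k, gp k = Y k • gπ - (πm / C₀) • F k := by
    intro k
    rw [hF k, smul_smul]
    have h1 : (πm / C₀) * (-(C₀ / πm)) = -1 := by
      field_simp
    rw [h1, neg_one_smul]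
    abel
  have hterm : ∀ k, (inner ℝ ((1 / m k) • F k) ((1 / p k) • gp k) : ℝ)
      = (1 / (ϑ * ϱ)) * inner ℝ (F k) gπ - πm * ‖F k‖ ^ 2 / (C₀ * ϑ * ϱk k) := by
    intro k
    rw [real_inner_smul_left, real_inner_smul_right, hgp k, inner_sub_right,
      real_inner_smul_right, real_inner_smul_right, real_inner_self_eq_norm_sq,
      hp k, hY k]
    have hmk := (hm k).ne'
    have hϱkk := (hϱk k).ne'
    field_simp
  have hsum : ∑ k, (inner ℝ ((1 / m k) • F k) ((1 / p k) • gp k) : ℝ)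
      = - ∑ k, πm * ‖F k‖ ^ 2 / (C₀ * ϑ * ϱk k) := by
    simp_rw [hterm]
    rw [Finset.sum_sub_distrib, ← Finset.mul_sum, ← sum_inner, hFsum,
      inner_zero_left, mul_zero, zero_sub]
  constructor
  · rw [hsum, neg_neg]
  · apply Finset.sum_nonneg
    intro k _
    have := hϱk k
    positivity
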